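/- The lattice (P₁(ℝ), ≤icv) is Dedekind super complete: every nonempty set K ⊆ P₁(ℝ) which is bounded above with respect to ≤icv has a least upper bound in P₁(ℝ) and a countable subset K₀ ⊆ K with the same least upper bound; dually, every nonempty K bounded below with respect to ≤icv has a greatest lower bound and a countable subset with the same greatest lower bound. The same statements hold for the order ≤icx in place of ≤icv. -/

import Mathlib

open MeasureTheory Filter Set Topology
open scoped ENNReal NNReal

/-- `P₁(ℝ)`: Borel probability measures on `ℝ` with finite first moment. -/
def P1 : Type :=
  {μ : Measure ℝ // IsProbabilityMeasure μ ∧ Integrable (fun x : ℝ => x) μ}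

/-- The integrated distribution function `s ↦ ∫ (s - x)⁺ dμ(x)`. -/
noncomputable def IntDF (μ : P1) (s : ℝ) : ℝ := ∫ x, max (s - x) 0 ∂μ.1

/-- The integrated survival function `s ↦ ∫ (x - s)⁺ dμ(x)`. -/
noncomputable def IntSF (μ : P1) (s : ℝ) : ℝ := ∫ x, max (x - s) 0 ∂μ.1

/-- Second order stochastic dominance (increasing concave order):
`μ ≤icv ν` iff `∫ (s-x)⁺ dμ ≥ ∫ (s-x)⁺ dν` for all `s`. -/
def Icv (μ ν : P1) : Prop := ∀ s : ℝ, IntDF ν s ≤ IntDF μ s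

/-- Increasing convex order: `μ ≤icx ν` iff `∫ (x-s)⁺ dμ ≤ ∫ (x-s)⁺ dν` for all `s`. -/
def Icx (μ ν : P1) : Prop := ∀ s : ℝ, IntSF μ s ≤ IntSF ν s

/-- Dedekind super completeness of `P₁(ℝ)` with respect to a relation `r`. -/
def SuperComplete (r : P1 → P1 → Prop) : Prop :=
  (∀ K : Set P1, K.Nonempty → (∃ b, ∀ μ ∈ K, r μ b) →
    ∃ σ : P1, (∀ μ ∈ K, r μ σ) ∧ (∀ b, (∀ μ ∈ K, r μ b) → r σ b) ∧
      ∃ K₀ ⊆ K, K₀.Countable ∧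
        (∀ μ ∈ K₀, r μ σ) ∧ (∀ b, (∀ μ ∈ K₀, r μ b) → r σ b)) ∧
  (∀ K : Set P1, K.Nonempty → (∃ b, ∀ μ ∈ K, r b μ) →
    ∃ τ : P1, (∀ μ ∈ K, r τ μ) ∧ (∀ b, (∀ μ ∈ K, r b μ) → r b τ) ∧
      ∃ K₀ ⊆ K, K₀.Countable ∧
        (∀ μ ∈ K₀, r τ μ) ∧ (∀ b, (∀ μ ∈ K₀, r b μ) → r b τ))

section Basic

variable (μ : P1)

instance P1.prob (μ : P1) : IsProbabilityMeasure μ.1 := μ.2.1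

lemma P1.int_id (μ : P1) : Integrable (fun x : ℝ => x) μ.1 := μ.2.2

lemma intDF_integrand_integrable (s : ℝ) :
    Integrable (fun x : ℝ => max (s - x) 0) μ.1 :=
  ((integrable_const s).sub μ.int_id).pos_part

lemma intSF_integrand_integrable (s : ℝ) :
    Integrable (fun x : ℝ => max (x - s) 0) μ.1 :=
  (μ.int_id.sub (integrable_const s)).pos_part

lemma intDF_nonneg (s : ℝ) : 0 ≤ IntDF μ s :=
  integral_nonneg fun x => le_max_right _ _

lemma intSF_nonneg (s : ℝ) : 0 ≤ IntSF μ s :=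
  integral_nonneg fun x => le_max_right _ _

lemma intDF_mono {s t : ℝ} (h : s ≤ t) : IntDF μ s ≤ IntDF μ t :=
  integral_mono (intDF_integrand_integrable μ s) (intDF_integrand_integrable μ t)
    (fun x => max_le_max (by linarith) le_rfl)

lemma intDF_lip {s t : ℝ} (h : s ≤ t) : IntDF μ t - IntDF μ s ≤ t - s := by
  have : IntDF μ t ≤ IntDF μ s + (t - s) := by
    have h1 : Integrable (fun x : ℝ => max (s - x) 0 + (t - s)) μ.1 :=
      (intDF_integrand_integrable μ s).add (integrable_const _)
    have h2 : IntDF μ t ≤ ∫ x, (max (s - x) 0 + (t - s)) ∂μ.1 :=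
      integral_mono (intDF_integrand_integrable μ t) h1 (fun x => by
        simp only; rcases le_total (t - x) 0 with hx | hx
        · have h0 := le_max_right (s - x) (0:ℝ); rw [max_eq_right hx]; linarith
        · rw [max_eq_left hx]
          have : s - x ≤ max (s - x) 0 := le_max_left _ _
          linarith)
    rw [integral_add (intDF_integrand_integrable μ s) (integrable_const _),
      integral_const] at h2
    simpa [IntDF] using h2
  linarith

lemma intDF_abs_sub (s t : ℝ) : |IntDF μ s - IntDF μ t| ≤ |s - t| := by
  rcases le_total s t with h | h
  · rw [abs_sub_comm, abs_of_nonneg (by linarith [intDF_mono μ h]),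
      abs_sub_comm, abs_of_nonneg (by linarith)]
    exact intDF_lip μ h
  · rw [abs_of_nonneg (by linarith [intDF_mono μ h]), abs_of_nonneg (by linarith)]
    exact intDF_lip μ h

lemma intDF_convexOn : ConvexOn ℝ univ (IntDF μ) := by
  refine ⟨convex_univ, fun x _ y _ a b ha hb hab => ?_⟩
  have h1 : ∀ t : ℝ, max (a • x + b • y - t) 0 ≤ a * max (x - t) 0 + b * max (y - t) 0 := by
    intro t
    refine max_le ?_ (by positivity)
    have hx : x - t ≤ max (x - t) 0 := le_max_left _ _
    have hy : y - t ≤ max (y - t) 0 := le_max_left _ _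
    have hxa := mul_le_mul_of_nonneg_left hx ha
    have hyb := mul_le_mul_of_nonneg_left hy hb
    have key : a • x + b • y - t = a * (x - t) + b * (y - t) := by
      simp only [smul_eq_mul]; linear_combination t * hab
    rw [key]; linarith
  have h2 : IntDF μ (a • x + b • y) ≤ ∫ t, (a * max (x - t) 0 + b * max (y - t) 0) ∂μ.1 :=
    integral_mono (intDF_integrand_integrable μ _)
      (((intDF_integrand_integrable μ x).const_mul a).add
        ((intDF_integrand_integrable μ y).const_mul b)) h1
  rw [integral_add ((intDF_integrand_integrable μ x).const_mul a)
      ((intDF_integrand_integrable μ y).const_mul b),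
    integral_const_mul, integral_const_mul] at h2
  simpa [IntDF, smul_eq_mul] using h2

lemma intSF_eq (s : ℝ) : IntSF μ s = IntDF μ s - s + ∫ x, x ∂μ.1 := by
  have heq : ∀ x : ℝ, max (x - s) 0 = max (s - x) 0 + (x - s) := by
    intro x; rcases le_total x s with h | h
    · rw [max_eq_right (by linarith), max_eq_left (by linarith)]; ring
    · rw [max_eq_left (by linarith), max_eq_right (by linarith)]; ring
  calc IntSF μ s = ∫ x, (max (s - x) 0 + (x - s)) ∂μ.1 := by
        unfold IntSF; exact integral_congr_ae (Eventually.of_forall heq)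
    _ = IntDF μ s - s + ∫ x, x ∂μ.1 := by
        have hg : Integrable (fun x : ℝ => x - s) μ.1 := μ.int_id.sub (integrable_const s)
        rw [integral_add (intDF_integrand_integrable μ s) hg]
        have : ∫ x, (x - s) ∂μ.1 = (∫ x, x ∂μ.1) - s := by
          rw [integral_sub μ.int_id (integrable_const s), integral_const]
          simp
        rw [this]
        simp [IntDF]; ring

lemma intDF_ge (s : ℝ) : s - ∫ x, x ∂μ.1 ≤ IntDF μ s := by
  have := intSF_nonneg μ s
  rw [intSF_eq] at this; linarith

lemma intSF_anti {s t : ℝ} (h : s ≤ t) : IntSF μ t ≤ IntSF μ s :=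
  integral_mono (intSF_integrand_integrable μ t) (intSF_integrand_integrable μ s)
    (fun x => max_le_max (by linarith) le_rfl)

lemma tendsto_intDF_atBot : Tendsto (IntDF μ) atBot (𝓝 0) := by
  have key : Tendsto (fun n : ℕ => IntDF μ (-(n:ℝ))) atTop (𝓝 0) := by
    have h0 : (0:ℝ) = ∫ x : ℝ, (0:ℝ) ∂μ.1 := by simp
    rw [h0]
    refine tendsto_integral_of_dominated_convergence (fun x => max (-x) 0)
      (fun n => (intDF_integrand_integrable μ _).aestronglyMeasurable)
      ((μ.int_id.neg).pos_part) ?_ ?_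
    · intro n
      refine Eventually.of_forall fun x => ?_
      rw [Real.norm_eq_abs, abs_of_nonneg (le_max_right _ _)]
      exact max_le_max (by have := Nat.cast_nonneg (α := ℝ) n; linarith) le_rfl
    · refine Eventually.of_forall fun x => ?_
      refine tendsto_const_nhds.congr' ?_
      filter_upwards [eventually_ge_atTop ⌈|x|⌉₊] with n hn
      have : |x| ≤ (n:ℝ) := le_trans (Nat.le_ceil _) (Nat.cast_le.2 hn)
      have : -(n:ℝ) - x ≤ 0 := by
        have := neg_abs_le x; linarith
      simp [max_eq_right this]
  rw [tendsto_order]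
  constructor
  · intro l hl
    exact Eventually.of_forall fun s => lt_of_lt_of_le hl (intDF_nonneg μ s)
  · intro u hu
    obtain ⟨n, hn⟩ := (key.eventually (gt_mem_nhds hu)).exists
    filter_upwards [eventually_le_atBot (-(n:ℝ))] with s hs
    exact lt_of_le_of_lt (intDF_mono μ hs) hn

lemma tendsto_intSF_atTop : Tendsto (IntSF μ) atTop (𝓝 0) := by
  have key : Tendsto (fun n : ℕ => IntSF μ (n:ℝ)) atTop (𝓝 0) := by
    have h0 : (0:ℝ) = ∫ x : ℝ, (0:ℝ) ∂μ.1 := by simp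
    rw [h0]
    refine tendsto_integral_of_dominated_convergence (fun x => max x 0)
      (fun n => (intSF_integrand_integrable μ _).aestronglyMeasurable)
      (μ.int_id.pos_part) ?_ ?_
    · intro n
      refine Eventually.of_forall fun x => ?_
      rw [Real.norm_eq_abs, abs_of_nonneg (le_max_right _ _)]
      exact max_le_max (by have := Nat.cast_nonneg (α := ℝ) n; linarith) le_rfl
    · refine Eventually.of_forall fun x => ?_
      refine tendsto_const_nhds.congr' ?_
      filter_upwards [eventually_ge_atTop ⌈|x|⌉₊] with n hn
      have : |x| ≤ (n:ℝ) := le_trans (Nat.le_ceil _) (Nat.cast_le.2 hn)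
      have : x - (n:ℝ) ≤ 0 := by
        have := le_abs_self x; linarith
      simp [max_eq_right this]
  rw [tendsto_order]
  constructor
  · intro l hl
    exact Eventually.of_forall fun s => lt_of_lt_of_le hl (intSF_nonneg μ s)
  · intro u hu
    obtain ⟨n, hn⟩ := (key.eventually (gt_mem_nhds hu)).exists
    filter_upwards [eventually_ge_atTop ((n:ℝ))] with s hs
    exact lt_of_le_of_lt (intSF_anti μ hs) hn

end Basic

section Realize

variable {G : ℝ → ℝ}

lemma aux_mono (hG : ConvexOn ℝ univ G) (h0 : Tendsto G atBot (𝓝 0))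
    {x y : ℝ} (hxy : x < y) : 0 ≤ G y - G x := by
  have hmono : ∀ w, w < x → (G x - G w) / (x - w) ≤ (G y - G x) / (y - x) :=
    fun w hw => hG.slope_mono_adjacent (mem_univ w) (mem_univ y) hw hxy
  have hlim : Tendsto (fun w => (G x - G w) / (x - w)) atBot (𝓝 0) := by
    have hnum : Tendsto (fun w => G x - G w) atBot (𝓝 (G x - 0)) :=
      tendsto_const_nhds.sub h0
    have hden : Tendsto (fun w : ℝ => x - w) atBot atTop := by
      have := tendsto_atTop_add_const_left atBot x
        (tendsto_neg_atBot_atTop : Tendsto (fun w : ℝ => -w) atBot atTop)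
      simpa [sub_eq_add_neg] using this
    exact hnum.div_atTop hden
  have h1 : (0:ℝ) ≤ (G y - G x) / (y - x) := by
    refine le_of_tendsto hlim ?_
    filter_upwards [eventually_lt_atBot x] with w hw using hmono w hw
  have h2 := (le_div_iff₀ (sub_pos.2 hxy)).mp h1
  linarith

lemma aux_lip (hG : ConvexOn ℝ univ G) {c : ℝ}
    (hc : Tendsto (fun s => G s - s) atTop (𝓝 (-c)))
    {x y : ℝ} (hxy : x < y) : G y - G x ≤ y - x := by
  have hmono : ∀ z, y < z → (G y - G x) / (y - x) ≤ (G z - G y) / (z - y) :=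
    fun z hz => hG.slope_mono_adjacent (mem_univ x) (mem_univ z) hxy hz
  have hden : Tendsto (fun z : ℝ => z - y) atTop atTop :=
    tendsto_atTop_add_const_right atTop (-y) tendsto_id
  have hlim : Tendsto (fun z => (G z - G y) / (z - y)) atTop (𝓝 1) := by
    have heq : ∀ᶠ z in atTop, 1 + ((G z - z) + (y - G y)) / (z - y) = (G z - G y) / (z - y) := by
      filter_upwards [eventually_gt_atTop y] with z hz
      have hne : z - y ≠ 0 := sub_ne_zero.2 (ne_of_gt hz)
      field_simp
      ring
    have hnum : Tendsto (fun z => (G z - z) + (y - G y)) atTop (𝓝 (-c + (y - G y))) :=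
      hc.add_const _
    have := (tendsto_const_nhds (x := (1:ℝ)) (f := atTop)).add (hnum.div_atTop hden)
    rw [add_zero] at this
    exact this.congr' heq
  have h1 : (G y - G x) / (y - x) ≤ 1 := by
    refine ge_of_tendsto hlim ?_
    filter_upwards [eventually_gt_atTop y] with z hz using hmono z hz
  have h2 := (div_le_one (sub_pos.2 hxy)).mp h1
  linarith

lemma aux_G_nonneg (hG : ConvexOn ℝ univ G) (h0 : Tendsto G atBot (𝓝 0)) (s : ℝ) :
    0 ≤ G s := by
  refine le_of_tendsto h0 ?_
  filter_upwards [eventually_le_atBot s] with w hw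
  rcases eq_or_lt_of_le hw with rfl | hw
  · exact le_rfl
  · linarith [aux_mono hG h0 hw]

lemma aux_G_sub_antitone (hG : ConvexOn ℝ univ G) {c : ℝ}
    (hc : Tendsto (fun s => G s - s) atTop (𝓝 (-c))) :
    Antitone (fun s => G s - s) := by
  intro x y hxy
  rcases eq_or_lt_of_le hxy with rfl | h
  · exact le_rfl
  · have := aux_lip hG hc h; simp only; linarith

lemma aux_G_sub_ge (hG : ConvexOn ℝ univ G) {c : ℝ}
    (hc : Tendsto (fun s => G s - s) atTop (𝓝 (-c))) (s : ℝ) :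
    -c ≤ G s - s := by
  refine le_of_tendsto hc ?_
  filter_upwards [eventually_ge_atTop s] with z hz
  exact aux_G_sub_antitone hG hc hz

lemma lintegral_max_eq (m : Measure ℝ) [IsFiniteMeasure m] (s : ℝ) :
    ∫⁻ x, ENNReal.ofReal (max (s - x) 0) ∂m = ∫⁻ t in Iio s, m (Iic t) := by
  set A : Set (ℝ × ℝ) := {p : ℝ × ℝ | p.1 ≤ p.2 ∧ p.2 < s} with hA_def
  have hA : MeasurableSet A :=
    (measurableSet_le measurable_fst measurable_snd).inter (measurable_snd measurableSet_Iio)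
  have hmble : AEMeasurable (Function.uncurry (fun x t => A.indicator (1 : ℝ × ℝ → ℝ≥0∞) (x, t))) (m.prod volume) := by
    have : Function.uncurry (fun (x t : ℝ) => A.indicator (1 : ℝ × ℝ → ℝ≥0∞) (x, t)) =
        A.indicator 1 := by
      funext p; cases p; rfl
    rw [this]
    exact (((measurable_const : Measurable (1 : ℝ × ℝ → ℝ≥0∞))).indicator hA).aemeasurable
  have step1 : ∀ x : ℝ, (∫⁻ t, A.indicator (1 : ℝ × ℝ → ℝ≥0∞) (x, t)) = ENNReal.ofReal (max (s - x) 0) := by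
    intro x
    have heq : (fun t => A.indicator (1 : ℝ × ℝ → ℝ≥0∞) (x, t)) = (Ico x s).indicator 1 := by
      funext t
      simp only [indicator_apply, Pi.one_apply, hA_def, mem_setOf_eq, mem_Ico]
    rw [heq, lintegral_indicator_one measurableSet_Ico, Real.volume_Ico]
    rcases le_total (s - x) 0 with h | h
    · rw [max_eq_right h, ENNReal.ofReal_of_nonpos h, ENNReal.ofReal_zero]
    · rw [max_eq_left h]
  have step3 : ∀ t : ℝ, (∫⁻ x, A.indicator (1 : ℝ × ℝ → ℝ≥0∞) (x, t) ∂m) =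
      (Iio s).indicator (fun t => m (Iic t)) t := by
    intro t
    by_cases ht : t < s
    · have heq : (fun x => A.indicator (1 : ℝ × ℝ → ℝ≥0∞) (x, t)) = (Iic t).indicator 1 := by
        funext x
        simp only [indicator_apply, Pi.one_apply, hA_def, mem_setOf_eq, mem_Iic,
          and_iff_left ht]
      rw [heq, lintegral_indicator_one measurableSet_Iic, indicator_of_mem (mem_Iio.2 ht)]
    · have heq : (fun x => A.indicator (1 : ℝ × ℝ → ℝ≥0∞) (x, t)) = fun _ => 0 := by
        funext x
        rw [indicator_of_notMem (by simp only [hA_def, mem_setOf_eq]; exact fun h => ht h.2)]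
      rw [heq, lintegral_zero, indicator_of_notMem (by simpa using ht)]
  calc ∫⁻ x, ENNReal.ofReal (max (s - x) 0) ∂m
      = ∫⁻ x, (∫⁻ t, A.indicator (1 : ℝ × ℝ → ℝ≥0∞) (x, t)) ∂m := by
        refine lintegral_congr fun x => (step1 x).symm
    _ = ∫⁻ t, (∫⁻ x, A.indicator (1 : ℝ × ℝ → ℝ≥0∞) (x, t) ∂m) := lintegral_lintegral_swap hmble
    _ = ∫⁻ t, (Iio s).indicator (fun t => m (Iic t)) t := lintegral_congr step3
    _ = ∫⁻ t in Iio s, m (Iic t) := lintegral_indicator measurableSet_Iio _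

lemma lintegral_pos_eq (m : Measure ℝ) [IsFiniteMeasure m] :
    ∫⁻ x, ENNReal.ofReal (max x 0) ∂m = ∫⁻ t in Ici 0, m (Ioi t) := by
  set A : Set (ℝ × ℝ) := {p : ℝ × ℝ | 0 ≤ p.2 ∧ p.2 < p.1} with hA_def
  have hA : MeasurableSet A :=
    (measurable_snd measurableSet_Ici).inter (measurableSet_lt measurable_snd measurable_fst)
  have hmble : AEMeasurable (Function.uncurry (fun x t => A.indicator (1 : ℝ × ℝ → ℝ≥0∞) (x, t))) (m.prod volume) := by
    have : Function.uncurry (fun (x t : ℝ) => A.indicator (1 : ℝ × ℝ → ℝ≥0∞) (x, t)) =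
        A.indicator 1 := by
      funext p; cases p; rfl
    rw [this]
    exact (((measurable_const : Measurable (1 : ℝ × ℝ → ℝ≥0∞))).indicator hA).aemeasurable
  have step1 : ∀ x : ℝ, (∫⁻ t, A.indicator (1 : ℝ × ℝ → ℝ≥0∞) (x, t)) = ENNReal.ofReal (max x 0) := by
    intro x
    have heq : (fun t => A.indicator (1 : ℝ × ℝ → ℝ≥0∞) (x, t)) = (Ico 0 x).indicator 1 := by
      funext t
      simp only [indicator_apply, Pi.one_apply, hA_def, mem_setOf_eq, mem_Ico]
    rw [heq, lintegral_indicator_one measurableSet_Ico, Real.volume_Ico]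
    rcases le_total x 0 with h | h
    · rw [max_eq_right h, ENNReal.ofReal_of_nonpos (by linarith), ENNReal.ofReal_zero]
    · rw [max_eq_left h, sub_zero]
  have step3 : ∀ t : ℝ, (∫⁻ x, A.indicator (1 : ℝ × ℝ → ℝ≥0∞) (x, t) ∂m) =
      (Ici 0).indicator (fun t => m (Ioi t)) t := by
    intro t
    by_cases ht : 0 ≤ t
    · have heq : (fun x => A.indicator (1 : ℝ × ℝ → ℝ≥0∞) (x, t)) = (Ioi t).indicator 1 := by
        funext x
        simp only [indicator_apply, Pi.one_apply, hA_def, mem_setOf_eq, mem_Ioi,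
          and_iff_right ht]
      rw [heq, lintegral_indicator_one measurableSet_Ioi, indicator_of_mem (mem_Ici.2 ht)]
    · have heq : (fun x => A.indicator (1 : ℝ × ℝ → ℝ≥0∞) (x, t)) = fun _ => 0 := by
        funext x
        rw [indicator_of_notMem (by simp only [hA_def, mem_setOf_eq]; exact fun h => ht h.1)]
      rw [heq, lintegral_zero, indicator_of_notMem (by simpa using ht)]
  calc ∫⁻ x, ENNReal.ofReal (max x 0) ∂m
      = ∫⁻ x, (∫⁻ t, A.indicator (1 : ℝ × ℝ → ℝ≥0∞) (x, t)) ∂m := by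
        refine lintegral_congr fun x => (step1 x).symm
    _ = ∫⁻ t, (∫⁻ x, A.indicator (1 : ℝ × ℝ → ℝ≥0∞) (x, t) ∂m) := lintegral_lintegral_swap hmble
    _ = ∫⁻ t, (Ici 0).indicator (fun t => m (Ioi t)) t := lintegral_congr step3
    _ = ∫⁻ t in Ici 0, m (Ioi t) := lintegral_indicator measurableSet_Ici _

/-- The main realization lemma: a convex function with the right asymptotics is the
integrated distribution function of a measure in `P₁(ℝ)`. -/
lemma exists_realize (hG : ConvexOn ℝ univ G) (h0 : Tendsto G atBot (𝓝 0)) {c : ℝ}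
    (hc : Tendsto (fun s => G s - s) atTop (𝓝 (-c))) :
    ∃ μ : P1, ∀ s, IntDF μ s = G s := by
  classical
  have hGcont : Continuous G := by
    rw [← continuousOn_univ]
    exact hG.continuousOn isOpen_univ
  -- the right derivative
  set g : ℝ → ℝ := fun x => sInf (slope G x '' Ioi x) with hg_def
  have hne : ∀ x : ℝ, (slope G x '' Ioi x).Nonempty :=
    fun x => ⟨slope G x (x + 1), mem_image_of_mem _ (by simp : x + 1 ∈ Ioi x)⟩
  have hslope_nonneg : ∀ x y : ℝ, x < y → 0 ≤ slope G x y := by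
    intro x y hxy
    rw [slope_def_field]
    exact div_nonneg (aux_mono hG h0 hxy) (by linarith)
  have hslope_le_one : ∀ x y : ℝ, x < y → slope G x y ≤ 1 := by
    intro x y hxy
    rw [slope_def_field]
    exact (div_le_one (sub_pos.2 hxy)).mpr (aux_lip hG hc hxy)
  have hbdd : ∀ x : ℝ, BddBelow (slope G x '' Ioi x) := by
    intro x
    exact ⟨0, fun v ⟨y, hy, hyv⟩ => hyv ▸ hslope_nonneg x y hy⟩
  have hgle : ∀ x y : ℝ, x < y → g x ≤ slope G x y :=
    fun x y hxy => csInf_le (hbdd x) (mem_image_of_mem _ hxy)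
  have hglb : ∀ (x v : ℝ), (∀ y, x < y → v ≤ slope G x y) → v ≤ g x :=
    fun x v hv => le_csInf (hne x) (fun w ⟨y, hy, hyw⟩ => hyw ▸ hv y hy)
  have hg0 : ∀ x, 0 ≤ g x := fun x => hglb x 0 (fun y hy => hslope_nonneg x y hy)
  have hg1 : ∀ x, g x ≤ 1 :=
    fun x => le_trans (hgle x (x + 1) (by simp)) (hslope_le_one x (x + 1) (by simp))
  have hslope_base : ∀ x x' y : ℝ, x ≤ x' → x' < y → slope G x y ≤ slope G x' y := by
    intro x x' y hxx hxy
    rw [slope_comm, slope_comm G x']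
    rw [slope_def_field, slope_def_field]
    exact hG.secant_mono (mem_univ y) (mem_univ x) (mem_univ x')
      (by intro h; rw [h] at hxx; exact absurd (lt_of_le_of_lt hxx hxy) (lt_irrefl _))
      (ne_of_lt hxy) hxx
  have hgmono : Monotone g := by
    intro x x' hxx
    refine hglb x' (g x) (fun y hy => ?_)
    exact le_trans (hgle x y (lt_of_le_of_lt hxx hy)) (hslope_base x x' y hxx hy)
  -- right derivative property
  have hderiv : ∀ x : ℝ, HasDerivWithinAt G (g x) (Ioi x) x := by
    intro x
    rw [hasDerivWithinAt_iff_tendsto_slope, diff_singleton_eq_self (by simp)]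
    have hm : MonotoneOn (slope G x) (Ioi x) := by
      intro y₁ h1 y₂ h2 h12
      rw [slope_def_field, slope_def_field]
      exact hG.secant_mono (mem_univ x) (mem_univ y₁) (mem_univ y₂)
        (ne_of_gt h1) (ne_of_gt h2) h12
    exact MonotoneOn.tendsto_nhdsGT hm (hbdd x)
  -- right continuity of g
  have hg_rc : ∀ x : ℝ, ContinuousWithinAt g (Ici x) x := by
    intro x
    rw [← continuousWithinAt_Ioi_iff_Ici]
    have htd : Tendsto g (𝓝[>] x) (𝓝 (sInf (g '' Ioi x))) :=
      Monotone.tendsto_nhdsGT hgmono x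
    have heq : sInf (g '' Ioi x) = g x := by
      refine le_antisymm ?_ ?_
      · rw [Real.sInf_le_iff (Monotone.map_bddBelow hgmono bddBelow_Ioi)
          ((nonempty_Ioi).image g)]
        intro ε hε
        obtain ⟨v, ⟨y, hy, rfl⟩, hv⟩ := exists_lt_of_csInf_lt (hne x)
          (lt_add_of_pos_right (g x) (half_pos hε))
        -- continuity of w ↦ slope G w y at x
        have hφ : ContinuousAt (fun w => (G y - G w) / (y - w)) x := by
          refine ContinuousAt.div (continuous_const.sub hGcont).continuousAt
            (continuous_const.sub continuous_id).continuousAt ?_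
          exact sub_ne_zero.2 (ne_of_gt hy)
        have hφx : (G y - G x) / (y - x) < g x + ε / 2 + ε / 2 := by
          rw [← slope_def_field]
          have : slope G x y < g x + ε / 2 := hv
          linarith
        have hev : ∀ᶠ w in 𝓝 x, (G y - G w) / (y - w) < g x + ε := by
          have := hφ.eventually_lt_const (by linarith : (G y - G x) / (y - x) < g x + ε)
          exact this
        have hev' : ∀ᶠ w in 𝓝[>] x, (G y - G w) / (y - w) < g x + ε :=
          hev.filter_mono nhdsWithin_le_nhds
        have hIoo : ∀ᶠ w in 𝓝[>] x, w ∈ Ioo x y := Ioo_mem_nhdsGT hy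
        obtain ⟨w, hw1, hw2⟩ := (hev'.and hIoo).exists
        refine ⟨g w, mem_image_of_mem g (mem_Ioi.2 hw2.1), ?_⟩
        refine lt_of_le_of_lt ?_ hw1
        have := hgle w y hw2.2
        rwa [slope_def_field] at this
      · refine le_csInf ((nonempty_Ioi).image g) ?_
        rintro v ⟨y, hy, rfl⟩
        exact hgmono (le_of_lt hy)
    rw [heq] at htd
    exact htd
  -- Stieltjes function
  set FF : StieltjesFunction ℝ := ⟨g, hgmono, hg_rc⟩ with hFF_def
  -- limits of g
  have hgbot : Tendsto g atBot (𝓝 0) := by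
    have hupper : ∀ x : ℝ, g x ≤ G (x + 1) - G x := by
      intro x
      have h1 := hgle x (x + 1) (by linarith)
      rw [slope_def_field] at h1
      have h2 : x + 1 - x = 1 := by ring
      rwa [h2, div_one] at h1
    have hup_td : Tendsto (fun x => G (x + 1) - G x) atBot (𝓝 0) := by
      have h1 : Tendsto (fun x : ℝ => x + 1) atBot atBot :=
        tendsto_atBot_add_const_right atBot 1 tendsto_id
      have := (h0.comp h1).sub h0
      simp only [Function.comp] at this
      simpa using this
    exact tendsto_of_tendsto_of_tendsto_of_le_of_le tendsto_const_nhds hup_td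
      (fun x => hg0 x) hupper
  have hgtop : Tendsto g atTop (𝓝 1) := by
    have hlower : ∀ x : ℝ, G x - G (x - 1) ≤ g x := by
      intro x
      refine hglb x _ (fun y hy => ?_)
      have h1 := hG.slope_mono_adjacent (mem_univ (x - 1)) (mem_univ y)
        (by linarith : x - 1 < x) hy
      have h2 : x - (x - 1) = 1 := by ring
      rw [h2, div_one] at h1
      rwa [slope_def_field]
    have hlow_td : Tendsto (fun x => G x - G (x - 1)) atTop (𝓝 1) := by
      have h1 : Tendsto (fun x : ℝ => x - 1) atTop atTop :=
        tendsto_atTop_add_const_right atTop (-1) tendsto_id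
      have h2 := hc.sub (hc.comp h1)
      have h3 := h2.add_const 1
      rw [(by ring : -c - -c + 1 = (1:ℝ))] at h3
      refine h3.congr (fun x => ?_)
      simp only [Function.comp]
      ring
    exact tendsto_of_tendsto_of_tendsto_of_le_of_le hlow_td tendsto_const_nhds hlower hg1
  have hFFbot : Tendsto FF atBot (𝓝 0) := hgbot
  have hFFtop : Tendsto FF atTop (𝓝 1) := hgtop
  set m : Measure ℝ := FF.measure with hm_def
  have hprob : IsProbabilityMeasure m := FF.isProbabilityMeasure hFFbot hFFtop
  have hIic : ∀ t, m (Iic t) = ENNReal.ofReal (g t) := by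
    intro t
    have := FF.measure_Iic hFFbot t
    simpa using this
  -- FTC
  have hFTC : ∀ a b : ℝ, a ≤ b → ∫ t in a..b, g t = G b - G a := by
    intro a b hab
    exact intervalIntegral.integral_eq_sub_of_hasDeriv_right (hGcont.continuousOn)
      (fun x _ => hderiv x) hgmono.intervalIntegrable
  have hg_meas : Measurable fun t => ENNReal.ofReal (g t) :=
    ENNReal.measurable_ofReal.comp hgmono.measurable
  have hIntOn : ∀ a b : ℝ, a ≤ b → IntegrableOn g (Ioc a b) volume := by
    intro a b hab
    exact (intervalIntegrable_iff_integrableOn_Ioc_of_le hab).mp hgmono.intervalIntegrable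
  -- the key identity : ∫⁻ t in Iio s, ofReal (g t) = ofReal (G s)
  have hkey : ∀ s : ℝ, ∫⁻ t in Iio s, ENNReal.ofReal (g t) = ENNReal.ofReal (G s) := by
    intro s
    set ρ : Measure ℝ := volume.withDensity (fun t => ENNReal.ofReal (g t)) with hρ_def
    have hρ : ∀ (A : Set ℝ), MeasurableSet A → ρ A = ∫⁻ t in A, ENNReal.ofReal (g t) :=
      fun A hA => withDensity_apply _ hA
    have hmonoU : Monotone (fun n : ℕ => Ioo (s - n) s) := by
      intro i j hij
      refine Ioo_subset_Ioo_left ?_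
      have : (i : ℝ) ≤ (j : ℝ) := Nat.cast_le.2 hij
      linarith
    have hU : ⋃ n : ℕ, Ioo (s - n) s = Iio s := by
      ext x
      simp only [mem_iUnion, mem_Ioo, mem_Iio]
      constructor
      · rintro ⟨n, _, h⟩; exact h
      · intro hx
        obtain ⟨n, hn⟩ := exists_nat_gt (s - x)
        exact ⟨n, by linarith, hx⟩
    have htdU := tendsto_measure_iUnion_atTop (μ := ρ) hmonoU
    rw [hU] at htdU
    have heach : ∀ n : ℕ, ρ (Ioo (s - n) s) = ENNReal.ofReal (G s - G (s - n)) := by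
      intro n
      have hab : s - (n:ℝ) ≤ s := by
        have : (0:ℝ) ≤ (n:ℝ) := Nat.cast_nonneg n
        linarith
      have h1 : ρ (Ioo (s - n) s) = ∫⁻ t in Ioc (s - n) s, ENNReal.ofReal (g t) := by
        rw [hρ _ measurableSet_Ioo]
        congr 1
        exact Measure.restrict_congr_set Ioo_ae_eq_Ioc
      rw [h1, ← ofReal_integral_eq_lintegral_ofReal (hIntOn _ _ hab)
        (Eventually.of_forall (fun t => hg0 t))]
      congr 1
      rw [← intervalIntegral.integral_of_le hab]
      exact hFTC _ _ hab
    have hlim : Tendsto (fun n : ℕ => ρ (Ioo (s - n) s)) atTop (𝓝 (ENNReal.ofReal (G s))) := by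
      have h1 : Tendsto (fun n : ℕ => s - (n:ℝ)) atTop atBot := by
        have h2 : Tendsto (fun n : ℕ => -(n:ℝ)) atTop atBot :=
          tendsto_neg_atTop_atBot.comp (tendsto_natCast_atTop_atTop)
        have := tendsto_atBot_add_const_left atTop s h2
        simpa [sub_eq_add_neg] using this
      have h3 : Tendsto (fun n : ℕ => G s - G (s - n)) atTop (𝓝 (G s - 0)) :=
        tendsto_const_nhds.sub (h0.comp h1)
      rw [sub_zero] at h3
      have h4 := (ENNReal.continuous_ofReal.tendsto _).comp h3
      refine h4.congr (fun n => ?_)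
      simp only [Function.comp]
      rw [heach n]
    have := tendsto_nhds_unique htdU hlim
    rw [← hρ _ measurableSet_Iio]
    exact this
  -- integrated distribution of m
  have hIntDF_lint : ∀ s : ℝ, ∫⁻ x, ENNReal.ofReal (max (s - x) 0) ∂m = ENNReal.ofReal (G s) := by
    intro s
    rw [lintegral_max_eq m s]
    have : ∀ t : ℝ, m (Iic t) = ENNReal.ofReal (g t) := hIic
    rw [setLIntegral_congr_fun measurableSet_Iio (fun t _ => hIic t)]
    exact hkey s
  -- finiteness of the positive part
  have hpos_fin : ∫⁻ x, ENNReal.ofReal (max x 0) ∂m < ∞ := by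
    rw [lintegral_pos_eq m]
    have hIoi : ∀ t : ℝ, m (Ioi t) = ENNReal.ofReal (1 - g t) := by
      intro t
      have h1 : Ioi t = (Iic t)ᶜ := by simp [compl_Iic]
      rw [h1, measure_compl measurableSet_Iic (measure_ne_top m _), hIic t]
      rw [ENNReal.ofReal_sub _ (hg0 t)]
      simp [hprob.measure_univ]
    rw [setLIntegral_congr_fun measurableSet_Ici (fun t _ => hIoi t)]
    -- bound via monotone union
    set ρ : Measure ℝ := volume.withDensity (fun t => ENNReal.ofReal (1 - g t)) with hρ_def
    have hmeas1g : Measurable fun t => ENNReal.ofReal (1 - g t) :=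
      ENNReal.measurable_ofReal.comp (measurable_const.sub hgmono.measurable)
    have hρ : ∀ (A : Set ℝ), MeasurableSet A → ρ A = ∫⁻ t in A, ENNReal.ofReal (1 - g t) :=
      fun A hA => withDensity_apply _ hA
    have hIciIoi : ∫⁻ t in Ici (0:ℝ), ENNReal.ofReal (1 - g t)
        = ∫⁻ t in Ioi (0:ℝ), ENNReal.ofReal (1 - g t) := by
      congr 1
      exact (Measure.restrict_congr_set Ioi_ae_eq_Ici).symm
    rw [hIciIoi, ← hρ _ measurableSet_Ioi]
    have hmonoU : Monotone (fun n : ℕ => Ioo (0:ℝ) n) := by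
      intro i j hij
      exact Ioo_subset_Ioo_right (Nat.cast_le.2 hij)
    have hU : ⋃ n : ℕ, Ioo (0:ℝ) n = Ioi 0 := by
      ext x
      simp only [mem_iUnion, mem_Ioo, mem_Ioi]
      constructor
      · rintro ⟨n, h, _⟩; exact h
      · intro hx
        obtain ⟨n, hn⟩ := exists_nat_gt x
        exact ⟨n, hx, hn⟩
    have htdU := tendsto_measure_iUnion_atTop (μ := ρ) hmonoU
    rw [hU] at htdU
    have heach : ∀ n : ℕ, ρ (Ioo (0:ℝ) n) ≤ ENNReal.ofReal (G 0 + c) := by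
      intro n
      have hn0 : (0:ℝ) ≤ (n:ℝ) := Nat.cast_nonneg n
      have h1 : ρ (Ioo (0:ℝ) n) = ∫⁻ t in Ioc (0:ℝ) n, ENNReal.ofReal (1 - g t) := by
        rw [hρ _ measurableSet_Ioo]
        congr 1
        exact Measure.restrict_congr_set Ioo_ae_eq_Ioc
      have hint1g : IntegrableOn (fun t => 1 - g t) (Ioc (0:ℝ) n) volume :=
        (integrableOn_const (by simp [Real.volume_Ioc])).sub (hIntOn 0 n hn0)
      rw [h1, ← ofReal_integral_eq_lintegral_ofReal hint1g
        (Eventually.of_forall (fun t => by simp [hg1 t]))]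
      refine ENNReal.ofReal_le_ofReal ?_
      have h2 : ∫ t in Ioc (0:ℝ) n, (1 - g t) = (n:ℝ) - (G n - G 0) := by
        rw [← intervalIntegral.integral_of_le hn0]
        rw [intervalIntegral.integral_sub intervalIntegrable_const hgmono.intervalIntegrable]
        rw [hFTC 0 n hn0]
        simp
      rw [h2]
      have h3 := aux_G_sub_ge hG hc (n:ℝ)
      linarith
    have hfin : ρ (Ioi (0:ℝ)) ≤ ENNReal.ofReal (G 0 + c) := le_of_tendsto htdU
      (Eventually.of_forall heach)
    exact lt_of_le_of_lt hfin ENNReal.ofReal_lt_top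
  -- integrability of the identity
  have hint_id : Integrable (fun x : ℝ => x) m := by
    refine ⟨measurable_id.aestronglyMeasurable, ?_⟩
    rw [hasFiniteIntegral_iff_norm]
    have habs : ∀ x : ℝ, ENNReal.ofReal ‖x‖ ≤
        ENNReal.ofReal (max x 0) + ENNReal.ofReal (max (0 - x) 0) := by
      intro x
      rw [← ENNReal.ofReal_add (le_max_right _ _) (le_max_right _ _)]
      refine ENNReal.ofReal_le_ofReal ?_
      rw [Real.norm_eq_abs]
      rcases le_total x 0 with h | h
      · rw [abs_of_nonpos h, max_eq_right h, max_eq_left (by linarith)]; linarith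
      · rw [abs_of_nonneg h, max_eq_left h, max_eq_right (by linarith)]; linarith
    calc ∫⁻ x, ENNReal.ofReal ‖x‖ ∂m
        ≤ ∫⁻ x, (ENNReal.ofReal (max x 0) + ENNReal.ofReal (max (0 - x) 0)) ∂m :=
          lintegral_mono habs
      _ = (∫⁻ x, ENNReal.ofReal (max x 0) ∂m) + ∫⁻ x, ENNReal.ofReal (max (0 - x) 0) ∂m := by
          refine lintegral_add_left ?_ _
          exact ENNReal.measurable_ofReal.comp (measurable_id.max measurable_const)
      _ < ∞ := by
          refine ENNReal.add_lt_top.2 ⟨hpos_fin, ?_⟩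
          rw [hIntDF_lint 0]
          exact ENNReal.ofReal_lt_top
  refine ⟨⟨m, hprob, hint_id⟩, fun s => ?_⟩
  have hnn : (0 : ℝ → ℝ) ≤ᵐ[m] fun x => max (s - x) 0 :=
    Eventually.of_forall (fun x => by simp)
  have hmeas : AEStronglyMeasurable (fun x : ℝ => max (s - x) 0) m :=
    ((continuous_const.sub continuous_id).max continuous_const).aestronglyMeasurable
  have := integral_eq_lintegral_of_nonneg_ae hnn hmeas
  show ∫ x, max (s - x) 0 ∂m = G s
  rw [this, hIntDF_lint s, ENNReal.toReal_ofReal (aux_G_nonneg hG h0 s)]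

end Realize

section Master

lemma intDF_lip' (μ : P1) (x y : ℝ) : IntDF μ x ≤ IntDF μ y + |x - y| := by
  have := intDF_abs_sub μ x y
  have := abs_le.1 this
  linarith [this.2]

lemma one_div_succ_pos (n : ℕ) : (0:ℝ) < 1 / (n + 1) := by positivity

lemma tendsto_sub_one_div (a : ℝ) :
    Tendsto (fun n : ℕ => a - 1 / (n + 1)) atTop (𝓝 a) := by
  have := tendsto_const_nhds (x := a) (f := (atTop : Filter ℕ)) |>.sub
    tendsto_one_div_add_atTop_nhds_zero_nat
  simpa using this

/-- Master lemma: a nonempty family of measures in `P₁` whose `IntDF`s are pointwise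
bounded above by the `IntDF` of a fixed measure admits a measure realizing the pointwise
supremum, together with a countable subfamily determining it. -/
lemma master (S : Set P1) (hne : S.Nonempty) (ν : P1)
    (hν : ∀ μ ∈ S, ∀ s, IntDF μ s ≤ IntDF ν s) :
    ∃ τ : P1, (∀ μ ∈ S, ∀ s, IntDF μ s ≤ IntDF τ s) ∧
      (∀ b : P1, (∀ μ ∈ S, ∀ s, IntDF μ s ≤ IntDF b s) → ∀ s, IntDF τ s ≤ IntDF b s) ∧
      ∃ S₀ ⊆ S, S₀.Countable ∧
        ∀ b : P1, (∀ μ ∈ S₀, ∀ s, IntDF μ s ≤ IntDF b s) → ∀ s, IntDF τ s ≤ IntDF b s := by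
  classical
  obtain ⟨μ₀, hμ₀⟩ := hne
  set H : ℝ → ℝ := fun s => sSup ((fun μ => IntDF μ s) '' S) with hH_def
  have hne_im : ∀ s : ℝ, ((fun μ => IntDF μ s) '' S).Nonempty :=
    fun s => ⟨_, mem_image_of_mem _ hμ₀⟩
  have hbdd : ∀ s : ℝ, BddAbove ((fun μ => IntDF μ s) '' S) := by
    intro s
    exact ⟨IntDF ν s, fun v ⟨μ, hμ, hv⟩ => hv ▸ hν μ hμ s⟩
  have h_le : ∀ μ ∈ S, ∀ s, IntDF μ s ≤ H s :=
    fun μ hμ s => le_csSup (hbdd s) (mem_image_of_mem _ hμ)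
  have h_ub : ∀ (b : P1), (∀ μ ∈ S, ∀ s, IntDF μ s ≤ IntDF b s) → ∀ s, H s ≤ IntDF b s :=
    fun b hb s => csSup_le (hne_im s) (fun v ⟨μ, hμ, hv⟩ => hv ▸ hb μ hμ s)
  have hHlip : ∀ x y : ℝ, H x ≤ H y + |x - y| := by
    intro x y
    refine csSup_le (hne_im x) ?_
    rintro v ⟨μ, hμ, rfl⟩
    exact le_trans (intDF_lip' μ x y) (by linarith [h_le μ hμ y])
  have hconv : ConvexOn ℝ univ H := by
    refine ⟨convex_univ, fun x _ y _ a b ha hb hab => ?_⟩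
    refine csSup_le (hne_im _) ?_
    rintro v ⟨μ, hμ, rfl⟩
    have h1 := (intDF_convexOn μ).2 (mem_univ x) (mem_univ y) ha hb hab
    simp only [smul_eq_mul] at h1 ⊢
    have h2 := mul_le_mul_of_nonneg_left (h_le μ hμ x) ha
    have h3 := mul_le_mul_of_nonneg_left (h_le μ hμ y) hb
    linarith
  have hH0 : Tendsto H atBot (𝓝 0) := by
    refine tendsto_of_tendsto_of_tendsto_of_le_of_le tendsto_const_nhds
      (tendsto_intDF_atBot ν) (fun s => le_trans (intDF_nonneg μ₀ s) (h_le μ₀ hμ₀ s))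
      (fun s => csSup_le (hne_im s) ?_)
    rintro v ⟨μ, hμ, rfl⟩
    exact hν μ hμ s
  have hanti : Antitone (fun s => H s - s) := by
    intro s t hst
    simp only
    have : H t ≤ H s + (t - s) := by
      refine csSup_le (hne_im t) ?_
      rintro v ⟨μ, hμ, rfl⟩
      linarith [intDF_lip μ hst, h_le μ hμ s]
    linarith
  have hbddb : BddBelow (range fun s => H s - s) := by
    refine ⟨-∫ x, x ∂μ₀.1, ?_⟩
    rintro v ⟨s, rfl⟩
    have h1 := intDF_ge μ₀ s
    have h2 := h_le μ₀ hμ₀ s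
    simp only
    linarith
  have hHtop := tendsto_atTop_ciInf hanti hbddb
  obtain ⟨τ, hτ⟩ := exists_realize hconv hH0 (c := -(⨅ s : ℝ, (H s - s)))
    (by rwa [neg_neg])
  -- countable selection
  have hsel : ∀ (q : ℚ) (n : ℕ), ∃ μ ∈ S, H q - 1 / (n + 1) < IntDF μ q := by
    intro q n
    obtain ⟨v, ⟨μ, hμ, rfl⟩, hv⟩ := exists_lt_of_lt_csSup (hne_im (q:ℝ))
      (by linarith [one_div_succ_pos n] : H q - 1 / (n + 1) < H q)
    exact ⟨μ, hμ, hv⟩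
  choose f hf1 hf2 using hsel
  refine ⟨τ, fun μ hμ s => (h_le μ hμ s).trans_eq (hτ s).symm,
    fun b hb s => (hτ s).le.trans (h_ub b hb s),
    range (fun p : ℚ × ℕ => f p.1 p.2), ?_, countable_range _, ?_⟩
  · rintro μ ⟨p, rfl⟩
    exact hf1 p.1 p.2
  · intro b hb s
    rw [hτ s]
    have hrat : ∀ q : ℚ, H q ≤ IntDF b q := by
      intro q
      refine le_of_tendsto (tendsto_sub_one_div (H q)) (Eventually.of_forall fun n => ?_)
      exact le_trans (hf2 q n).le (hb _ ⟨(q, n), rfl⟩ q)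
    refine le_of_forall_pos_le_add (fun ε hε => ?_)
    obtain ⟨q, hq⟩ := exists_rat_near s (half_pos hε)
    have h1 : H s ≤ H q + |s - (q:ℝ)| := hHlip s q
    have h2 : IntDF b q ≤ IntDF b s + |(q:ℝ) - s| := intDF_lip' b q s
    rw [abs_sub_comm] at h2
    linarith [hrat q]

end Master

lemma icv_sup (K : Set P1) (hK : K.Nonempty) (hbd : ∃ b, ∀ μ ∈ K, Icv μ b) :
    ∃ σ : P1, (∀ μ ∈ K, Icv μ σ) ∧ (∀ b, (∀ μ ∈ K, Icv μ b) → Icv σ b) ∧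
      ∃ K₀ ⊆ K, K₀.Countable ∧
        (∀ μ ∈ K₀, Icv μ σ) ∧ (∀ b, (∀ μ ∈ K₀, Icv μ b) → Icv σ b) := by
  classical
  obtain ⟨b₀, hb₀⟩ := hbd
  obtain ⟨μ₀, hμ₀⟩ := hK
  set S : Set P1 := {b : P1 | ∀ μ ∈ K, Icv μ b} with hS_def
  have hb₀S : b₀ ∈ S := hb₀
  obtain ⟨σ, h1, h2, -⟩ := master S ⟨b₀, hb₀S⟩ μ₀ (fun b hb s => hb μ₀ hμ₀ s)
  have hub : ∀ μ ∈ K, Icv μ σ := by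
    intro μ hμ s
    exact h2 μ (fun b' hb' s' => hb' μ hμ s') s
  have hleast : ∀ b, (∀ μ ∈ K, Icv μ b) → Icv σ b := by
    intro b hb s
    exact h1 b hb s
  -- countable subset of K
  set F : ℝ → ℝ := fun s => sInf ((fun μ => IntDF μ s) '' K) with hF_def
  have hne_im : ∀ s : ℝ, ((fun μ => IntDF μ s) '' K).Nonempty :=
    fun s => ⟨_, mem_image_of_mem _ hμ₀⟩
  have hbddF : ∀ s : ℝ, BddBelow ((fun μ => IntDF μ s) '' K) := by
    intro s
    exact ⟨0, fun v ⟨μ, hμ, hv⟩ => hv ▸ intDF_nonneg μ s⟩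
  have hFle : ∀ μ ∈ K, ∀ s, F s ≤ IntDF μ s :=
    fun μ hμ s => csInf_le (hbddF s) (mem_image_of_mem _ hμ)
  have hsel : ∀ (q : ℚ) (n : ℕ), ∃ μ ∈ K, IntDF μ q < F q + 1 / (n + 1) := by
    intro q n
    obtain ⟨v, ⟨μ, hμ, rfl⟩, hv⟩ := exists_lt_of_csInf_lt (hne_im (q:ℝ))
      (by linarith [one_div_succ_pos n] : F q < F q + 1 / (n + 1))
    exact ⟨μ, hμ, hv⟩
  choose f hf1 hf2 using hsel
  refine ⟨σ, hub, hleast, range (fun p : ℚ × ℕ => f p.1 p.2), ?_, countable_range _,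
    ?_, ?_⟩
  · rintro μ ⟨p, rfl⟩
    exact hf1 p.1 p.2
  · rintro μ ⟨p, rfl⟩
    exact hub _ (hf1 p.1 p.2)
  · intro b hb
    have hrat : ∀ q : ℚ, IntDF b q ≤ F q := by
      intro q
      have htd : Tendsto (fun n : ℕ => F q + 1 / (n + 1)) atTop (𝓝 (F q)) := by
        have := tendsto_const_nhds (x := F q) (f := (atTop : Filter ℕ)) |>.add
          tendsto_one_div_add_atTop_nhds_zero_nat
        simpa using this
      refine ge_of_tendsto htd (Eventually.of_forall fun n => ?_)
      exact le_trans (hb _ ⟨(q, n), rfl⟩ (q:ℝ)) (hf2 q n).le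
    have hbS : b ∈ S := by
      intro μ hμ s
      refine le_of_forall_pos_le_add (fun ε hε => ?_)
      obtain ⟨q, hq⟩ := exists_rat_near s (half_pos hε)
      have h1 : IntDF b s ≤ IntDF b q + |s - (q:ℝ)| := intDF_lip' b s q
      have h2 : IntDF μ q ≤ IntDF μ s + |(q:ℝ) - s| := intDF_lip' μ q s
      rw [abs_sub_comm] at h2
      linarith [hrat q, hFle μ hμ (q:ℝ)]
    exact h1 b hbS

lemma icv_inf (K : Set P1) (hK : K.Nonempty) (hbd : ∃ b, ∀ μ ∈ K, Icv b μ) :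
    ∃ τ : P1, (∀ μ ∈ K, Icv τ μ) ∧ (∀ b, (∀ μ ∈ K, Icv b μ) → Icv b τ) ∧
      ∃ K₀ ⊆ K, K₀.Countable ∧
        (∀ μ ∈ K₀, Icv τ μ) ∧ (∀ b, (∀ μ ∈ K₀, Icv b μ) → Icv b τ) := by
  obtain ⟨b₀, hb₀⟩ := hbd
  obtain ⟨τ, h1, h2, S₀, hsub, hcount, h3⟩ := master K hK b₀ (fun μ hμ s => hb₀ μ hμ s)
  exact ⟨τ, fun μ hμ s => h1 μ hμ s, fun b hb s => h2 b hb s,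
    S₀, hsub, hcount, fun μ hμ s => h1 μ (hsub hμ) s, fun b hb s => h3 b hb s⟩

section Reflection

/-- Reflection of a measure under `x ↦ -x`. -/
noncomputable def negP (μ : P1) : P1 :=
  ⟨Measure.map Neg.neg μ.1, by
    refine ⟨?_, ?_⟩
    · have : IsProbabilityMeasure μ.1 := μ.2.1
      exact Measure.isProbabilityMeasure_map measurable_neg.aemeasurable
    · have h1 : AEStronglyMeasurable (fun x : ℝ => x) (Measure.map Neg.neg μ.1) :=
        aestronglyMeasurable_id
      rw [integrable_map_measure h1 measurable_neg.aemeasurable]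
      exact μ.2.2.neg'⟩

lemma negP_negP (μ : P1) : negP (negP μ) = μ := by
  refine Subtype.ext ?_
  show Measure.map Neg.neg (Measure.map Neg.neg μ.1) = μ.1
  rw [Measure.map_map measurable_neg measurable_neg]
  have : (Neg.neg ∘ Neg.neg : ℝ → ℝ) = id := by funext x; simp
  rw [this, Measure.map_id]

lemma intSF_negP (μ : P1) (s : ℝ) : IntSF μ s = IntDF (negP μ) (-s) := by
  show _ = ∫ x, max (-s - x) 0 ∂(Measure.map Neg.neg μ.1)
  have h1 : AEStronglyMeasurable (fun x : ℝ => max (-s - x) 0) (Measure.map Neg.neg μ.1) :=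
    Continuous.aestronglyMeasurable (by continuity)
  rw [integral_map measurable_neg.aemeasurable h1]
  refine integral_congr_ae (Eventually.of_forall fun x => ?_)
  simp only
  congr 1
  ring

lemma icx_iff_icv (μ ν : P1) : Icx μ ν ↔ Icv (negP ν) (negP μ) := by
  constructor
  · intro h s
    have := h (-s)
    rw [intSF_negP μ (-s), intSF_negP ν (-s), neg_neg] at this
    exact this
  · intro h s
    rw [intSF_negP μ s, intSF_negP ν s]
    exact h (-s)

end Reflection


/-- **Statement 14.** The lattices `(P₁(ℝ), ≤icv)` and `(P₁(ℝ), ≤icx)` are Dedekind super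
complete: every nonempty subset bounded above has a least upper bound and a countable subset
with the same least upper bound, and dually for subsets bounded below. -/
theorem stmt_14 : SuperComplete Icv ∧ SuperComplete Icx := by
  have hicv_sup := icv_sup
  have hicv_inf := icv_inf
  constructor
  · exact ⟨fun K hK hbd => hicv_sup K hK hbd, fun K hK hbd => hicv_inf K hK hbd⟩
  constructor
  · -- bounded above for Icx
    intro K hK hbd
    obtain ⟨b, hb⟩ := hbd
    have hK' : (negP '' K).Nonempty := hK.image _
    have hlb : ∀ μ' ∈ negP '' K, Icv (negP b) μ' := by
      rintro μ' ⟨μ, hμ, rfl⟩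
      exact (icx_iff_icv μ b).1 (hb μ hμ)
    obtain ⟨τ, hτ1, hτ2, K₀', hsub', hcount', hτ3, hτ4⟩ :=
      hicv_inf (negP '' K) hK' ⟨negP b, hlb⟩
    refine ⟨negP τ, ?_, ?_, negP '' K₀', ?_, hcount'.image _, ?_, ?_⟩
    · intro μ hμ
      rw [icx_iff_icv, negP_negP]
      exact hτ1 _ (mem_image_of_mem _ hμ)
    · intro b' hb'
      rw [icx_iff_icv, negP_negP]
      refine hτ2 (negP b') ?_
      rintro μ' ⟨μ, hμ, rfl⟩
      exact (icx_iff_icv μ b').1 (hb' μ hμ)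
    · rintro μ ⟨μ', hμ', rfl⟩
      obtain ⟨ν, hν, rfl⟩ := hsub' hμ'
      rw [negP_negP]
      exact hν
    · rintro μ ⟨μ', hμ', rfl⟩
      rw [icx_iff_icv, negP_negP, negP_negP]
      exact hτ3 _ hμ'
    · intro b' hb'
      rw [icx_iff_icv, negP_negP]
      refine hτ4 (negP b') ?_
      intro μ' hμ'
      have := hb' (negP μ') (mem_image_of_mem _ hμ')
      rw [icx_iff_icv, negP_negP] at this
      exact this
  · -- bounded below for Icx
    intro K hK hbd
    obtain ⟨b, hb⟩ := hbd
    have hK' : (negP '' K).Nonempty := hK.image _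
    have hub : ∀ μ' ∈ negP '' K, Icv μ' (negP b) := by
      rintro μ' ⟨μ, hμ, rfl⟩
      exact (icx_iff_icv b μ).1 (hb μ hμ)
    obtain ⟨σ, hσ1, hσ2, K₀', hsub', hcount', hσ3, hσ4⟩ :=
      hicv_sup (negP '' K) hK' ⟨negP b, hub⟩
    refine ⟨negP σ, ?_, ?_, negP '' K₀', ?_, hcount'.image _, ?_, ?_⟩
    · intro μ hμ
      rw [icx_iff_icv, negP_negP]
      exact hσ1 _ (mem_image_of_mem _ hμ)
    · intro b' hb'
      rw [icx_iff_icv, negP_negP]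
      refine hσ2 (negP b') ?_
      rintro μ' ⟨μ, hμ, rfl⟩
      exact (icx_iff_icv b' μ).1 (hb' μ hμ)
    · rintro μ ⟨μ', hμ', rfl⟩
      obtain ⟨ν, hν, rfl⟩ := hsub' hμ'
      rw [negP_negP]
      exact hν
    · rintro μ ⟨μ', hμ', rfl⟩
      rw [icx_iff_icv, negP_negP, negP_negP]
      exact hσ3 _ hμ'
    · intro b' hb'
      rw [icx_iff_icv, negP_negP]
      refine hσ4 (negP b') ?_
      intro μ' hμ'
      have := hb' (negP μ') (mem_image_of_mem _ hμ')
      rw [icx_iff_icv, negP_negP] at this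
      exact this
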